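/- Let m, n be positive natural numbers, σ > 0, and let (c(p,q))_{p<2m, q<2n} be a family of independent real random variables on a probability space (Ω, P), each with law equal to the Gaussian measure with mean 0 and variance σ². Define L1 = (1/(4mn)) · Σ_{p<2m, q<2n} |c(p,q)|, and for each Haar filter f ∈ {LL, LH, HL, HH} define L1_f = (1/(mn)) · Σ_{i<m, j<n} |f-coefficient of c at block (i,j)|. Then log E[L1] + log 2 = (1/4) · (log E[L1_LL] + log E[L1_LH] + log E[L1_HL] + log E[L1_HH]); that is, Lemma 1 of the paper holds exactly in the centered case μ = 0 with the constant C = log 2. -/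

import Mathlib

open MeasureTheory ProbabilityTheory Real

/-- The index `2*i` inside `Fin (2*m)`. -/
def idxLo {m : ℕ} (i : Fin m) : Fin (2 * m) := ⟨2 * i.val, by have := i.isLt; omega⟩

/-- The index `2*i+1` inside `Fin (2*m)`. -/
def idxHi {m : ℕ} (i : Fin m) : Fin (2 * m) := ⟨2 * i.val + 1, by have := i.isLt; omega⟩

/-- The `LL` Haar coefficient of `c` at block `(i, j)`. -/
def haarLL {m n : ℕ} (c : Fin (2 * m) × Fin (2 * n) → ℝ) (i : Fin m) (j : Fin n) : ℝ :=
  c (idxLo i, idxLo j) + c (idxLo i, idxHi j) + c (idxHi i, idxLo j) + c (idxHi i, idxHi j)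

/-- The `LH` Haar coefficient of `c` at block `(i, j)`. -/
def haarLH {m n : ℕ} (c : Fin (2 * m) × Fin (2 * n) → ℝ) (i : Fin m) (j : Fin n) : ℝ :=
  -c (idxHi i, idxHi j) - c (idxHi i, idxLo j) + c (idxLo i, idxHi j) + c (idxLo i, idxLo j)

/-- The `HL` Haar coefficient of `c` at block `(i, j)`. -/
def haarHL {m n : ℕ} (c : Fin (2 * m) × Fin (2 * n) → ℝ) (i : Fin m) (j : Fin n) : ℝ :=
  -c (idxHi i, idxHi j) + c (idxHi i, idxLo j) - c (idxLo i, idxHi j) + c (idxLo i, idxLo j)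

/-- The `HH` Haar coefficient of `c` at block `(i, j)`. -/
def haarHH {m n : ℕ} (c : Fin (2 * m) × Fin (2 * n) → ℝ) (i : Fin m) (j : Fin n) : ℝ :=
  c (idxHi i, idxHi j) - c (idxHi i, idxLo j) - c (idxLo i, idxHi j) + c (idxLo i, idxLo j)

open scoped ENNReal NNReal

lemma hp_pdf_prod_eq {v : ℝ≥0} (hv : 0 < (v : ℝ)) (u x : ℝ) :
    gaussianPDFReal 0 v x * gaussianPDFReal 0 v (u - x)
      = ((√(2 * π * v))⁻¹ * (√(2 * π * v))⁻¹ * rexp (-u ^ 2 / (4 * v)))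
          * rexp (-(v : ℝ)⁻¹ * (x - u / 2) ^ 2) := by
  simp only [gaussianPDFReal, sub_zero]
  rw [mul_mul_mul_comm, ← Real.exp_add]
  conv_rhs => rw [mul_assoc, ← Real.exp_add]
  congr 1
  rw [Real.exp_eq_exp]
  have hv' : (v : ℝ) ≠ 0 := ne_of_gt hv
  field_simp
  ring

lemma hp_const_eq {v : ℝ≥0} (hv : 0 < (v : ℝ)) :
    (√(2 * π * (v : ℝ)))⁻¹ * (√(2 * π * (v : ℝ)))⁻¹ * √(π * v) = (√(2 * π * (2 * (v : ℝ))))⁻¹ := by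
  have h1 : (√(2 * π * (v : ℝ)))⁻¹ * (√(2 * π * (v : ℝ)))⁻¹ = (2 * π * (v : ℝ))⁻¹ := by
    rw [← mul_inv, Real.mul_self_sqrt (by positivity)]
  rw [h1]
  have h2 : √(2 * π * (2 * (v : ℝ))) = 2 * √(π * v) := by
    rw [show 2 * π * (2 * (v : ℝ)) = 2 ^ 2 * (π * v) by ring, Real.sqrt_mul (by positivity),
      Real.sqrt_sq (by norm_num)]
  have h3 : (2 * π * (v : ℝ)) = 2 * (√(π * v) * √(π * v)) := by
    rw [Real.mul_self_sqrt (by positivity)]; ring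
  rw [h2, h3]
  have h4 : √(π * (v : ℝ)) ≠ 0 := by positivity
  field_simp

lemma hp_pdf_conv {v : ℝ≥0} (hv : 0 < (v : ℝ)) (u : ℝ) :
    ∫ x, gaussianPDFReal 0 v x * gaussianPDFReal 0 v (u - x) = gaussianPDFReal 0 (2 * v) u := by
  simp_rw [hp_pdf_prod_eq hv]
  rw [integral_const_mul]
  have hsub : ∫ x : ℝ, rexp (-(v : ℝ)⁻¹ * (x - u / 2) ^ 2)
      = ∫ x : ℝ, rexp (-(v : ℝ)⁻¹ * x ^ 2) :=
    integral_sub_right_eq_self (fun x => rexp (-(v : ℝ)⁻¹ * x ^ 2)) (u / 2)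
  rw [hsub, integral_gaussian, show π / (v : ℝ)⁻¹ = π * v by field_simp]
  simp only [gaussianPDFReal, sub_zero, NNReal.coe_mul, NNReal.coe_ofNat]
  rw [show -u ^ 2 / (2 * (2 * (v : ℝ))) = -u ^ 2 / (4 * v) by ring]
  rw [← hp_const_eq hv]
  ring

lemma hp_integrable_pdf_conv {v : ℝ≥0} (hv : 0 < (v : ℝ)) (u : ℝ) :
    Integrable (fun x => gaussianPDFReal 0 v x * gaussianPDFReal 0 v (u - x)) := by
  simp_rw [hp_pdf_prod_eq hv]
  exact ((integrable_exp_neg_mul_sq (by positivity : (0:ℝ) < (v : ℝ)⁻¹)).comp_sub_right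
    (u / 2)).const_mul _

lemma hp_lintegral_pdf_conv {v : ℝ≥0} (hv : v ≠ 0) (u : ℝ) :
    ∫⁻ x, gaussianPDF 0 v x * gaussianPDF 0 v (u - x) = gaussianPDF 0 (2 * v) u := by
  have hvpos : 0 < (v : ℝ) := NNReal.coe_pos.mpr hv.bot_lt
  simp_rw [gaussianPDF, ← ENNReal.ofReal_mul (gaussianPDFReal_nonneg 0 v _)]
  rw [← ofReal_integral_eq_lintegral_ofReal (hp_integrable_pdf_conv hvpos u)
      (ae_of_all _ fun x => mul_nonneg (gaussianPDFReal_nonneg _ _ _) (gaussianPDFReal_nonneg _ _ _))]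
  rw [hp_pdf_conv hvpos u]

lemma hp_gauss_conv {v : ℝ≥0} (hv : v ≠ 0) :
    Measure.map (fun p : ℝ × ℝ => p.1 + p.2) ((gaussianReal 0 v).prod (gaussianReal 0 v))
      = gaussianReal 0 (2 * v) := by
  have h2v : (2 : ℝ≥0) * v ≠ 0 := by simp [hv]
  set f : ℝ → ℝ≥0∞ := gaussianPDF 0 v with hfdef
  have hfm : Measurable f := measurable_gaussianPDF 0 v
  have hμ : gaussianReal 0 v = volume.withDensity f := gaussianReal_of_var_ne_zero 0 hv
  ext s hs
  have hindm : Measurable (fun u : ℝ => s.indicator (1 : ℝ → ℝ≥0∞) u) :=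
    measurable_one.indicator hs
  rw [Measure.map_apply measurable_add hs, gaussianReal_apply _ h2v]
  have hps : MeasurableSet ((fun p : ℝ × ℝ => p.1 + p.2) ⁻¹' s) := measurable_add hs
  rw [Measure.prod_apply hps]
  have hinner : ∀ x : ℝ,
      (gaussianReal 0 v) (Prod.mk x ⁻¹' ((fun p : ℝ × ℝ => p.1 + p.2) ⁻¹' s))
        = ∫⁻ u, s.indicator 1 u * f (u - x) := by
    intro x
    have hsetm : MeasurableSet {y : ℝ | x + y ∈ s} := (measurable_const_add x) hs
    have hset : (Prod.mk x ⁻¹' ((fun p : ℝ × ℝ => p.1 + p.2) ⁻¹' s)) = {y : ℝ | x + y ∈ s} := rfl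
    rw [hμ, hset, withDensity_apply _ hsetm, ← lintegral_indicator hsetm _]
    have hT := lintegral_add_right_eq_self (μ := volume)
      (fun u => s.indicator (1 : ℝ → ℝ≥0∞) u * f (u - x)) x
    rw [← hT]
    congr 1 with y
    rw [add_sub_cancel_right]
    by_cases hy : x + y ∈ s
    · have hy' : y + x ∈ s := by rwa [add_comm]
      simp [Set.indicator, hy, hy', Set.mem_setOf_eq]
    · have hy' : ¬ (y + x ∈ s) := by rwa [add_comm]
      simp [Set.indicator, hy, hy', Set.mem_setOf_eq]
  simp_rw [hinner]
  rw [hμ, lintegral_withDensity_eq_lintegral_mul _ hfm]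
  swap
  · exact Measurable.lintegral_prod_right
      ((hindm.comp measurable_snd).mul (hfm.comp (measurable_snd.sub measurable_fst)))
  have hstep : ∀ x : ℝ, (f * fun x => ∫⁻ u, s.indicator 1 u * f (u - x)) x
      = ∫⁻ u, f x * (s.indicator 1 u * f (u - x)) := by
    intro x
    simp only [Pi.mul_apply]
    rw [← lintegral_const_mul' _ _ (by simp [hfdef, gaussianPDF] : f x ≠ ⊤)]
  simp_rw [hstep]
  rw [lintegral_lintegral_swap]
  swap
  · exact ((hfm.comp measurable_fst).mul ((hindm.comp measurable_snd).mul
      (hfm.comp (measurable_snd.sub measurable_fst)))).aemeasurable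
  have hstep2 : ∀ u : ℝ, ∫⁻ x, f x * (s.indicator 1 u * f (u - x))
      = s.indicator 1 u * gaussianPDF 0 (2 * v) u := by
    intro u
    have hne : s.indicator (1 : ℝ → ℝ≥0∞) u ≠ ⊤ := by
      by_cases hu : u ∈ s <;> simp [Set.indicator, hu]
    calc ∫⁻ x, f x * (s.indicator 1 u * f (u - x))
        = ∫⁻ x, s.indicator 1 u * (f x * f (u - x)) := by simp_rw [mul_left_comm]
      _ = s.indicator 1 u * ∫⁻ x, f x * f (u - x) := lintegral_const_mul' _ _ hne
      _ = s.indicator 1 u * gaussianPDF 0 (2 * v) u := by rw [hp_lintegral_pdf_conv hv u]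
  simp_rw [hstep2]
  have : ∀ u : ℝ, s.indicator (1 : ℝ → ℝ≥0∞) u * gaussianPDF 0 (2 * v) u
      = s.indicator (gaussianPDF 0 (2 * v)) u := by
    intro u
    by_cases hu : u ∈ s <;> simp [Set.indicator, hu]
  simp_rw [this]
  rw [lintegral_indicator hs]

lemma hp_map_add {Ω : Type*} [MeasurableSpace Ω] {P : Measure Ω} [IsProbabilityMeasure P]
    {X Y : Ω → ℝ} (hX : AEMeasurable X P) (hY : AEMeasurable Y P) (h : IndepFun X Y P)
    {v : ℝ≥0} (hv : v ≠ 0) (hlX : Measure.map X P = gaussianReal 0 v)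
    (hlY : Measure.map Y P = gaussianReal 0 v) :
    Measure.map (fun ω => X ω + Y ω) P = gaussianReal 0 (2 * v) := by
  have hpair : Measure.map (fun ω => (X ω, Y ω)) P
      = (gaussianReal 0 v).prod (gaussianReal 0 v) := by
    have h' := (indepFun_iff_map_prod_eq_prod_map_map hX hY).mp h
    rw [hlX, hlY] at h'
    exact h'
  have hc : (fun ω => X ω + Y ω)
      = (fun p : ℝ × ℝ => p.1 + p.2) ∘ (fun ω => (X ω, Y ω)) := rfl
  rw [hc, ← AEMeasurable.map_map_of_aemeasurable measurable_add.aemeasurable (hX.prodMk hY),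
    hpair, hp_gauss_conv hv]

lemma hp_map_const_mul {Ω : Type*} [MeasurableSpace Ω] {P : Measure Ω} {X : Ω → ℝ}
    {v : ℝ≥0} (hl : Measure.map X P = gaussianReal 0 v) {e : ℝ} (he : e = 1 ∨ e = -1) :
    Measure.map (fun ω => e * X ω) P = gaussianReal 0 v := by
  have hX : AEMeasurable X P := aemeasurable_of_map_neZero (by rw [hl]; infer_instance)
  have hc : (fun ω => e * X ω) = (fun x : ℝ => e * x) ∘ X := rfl
  rw [hc, ← AEMeasurable.map_map_of_aemeasurable (measurable_id'.const_mul e).aemeasurable hX,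
    hl, gaussianReal_map_const_mul]
  have h1 : (NNReal.mk (e ^ 2) (sq_nonneg e)) = 1 := by
    rcases he with h | h <;> (subst h; ext; norm_num)
  rw [mul_zero, h1, one_mul]

lemma hp_map_combo {Ω : Type*} [MeasurableSpace Ω] {P : Measure Ω} [IsProbabilityMeasure P]
    {ι : Type*} {d : ι → Ω → ℝ} (hmeas : ∀ p, Measurable (d p))
    (hind : iIndepFun d P) {v : ℝ≥0} (hv : v ≠ 0)
    (hlaw : ∀ p, Measure.map (d p) P = gaussianReal 0 v)
    (p1 p2 p3 p4 : ι) (h12 : p1 ≠ p2) (h13 : p1 ≠ p3) (h14 : p1 ≠ p4)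
    (h23 : p2 ≠ p3) (h24 : p2 ≠ p4) (h34 : p3 ≠ p4)
    {e1 e2 e3 e4 : ℝ} (he1 : e1 = 1 ∨ e1 = -1) (he2 : e2 = 1 ∨ e2 = -1)
    (he3 : e3 = 1 ∨ e3 = -1) (he4 : e4 = 1 ∨ e4 = -1) :
    Measure.map (fun ω => (e1 * d p1 ω + e2 * d p2 ω) + (e3 * d p3 ω + e4 * d p4 ω)) P
      = gaussianReal 0 (2 * (2 * v)) := by
  have h2v : (2 : ℝ≥0) * v ≠ 0 := by simp [hv]
  have hm12 : Measurable (fun q : ℝ × ℝ => e1 * q.1 + e2 * q.2) :=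
    (measurable_fst.const_mul e1).add (measurable_snd.const_mul e2)
  have hm34 : Measurable (fun q : ℝ × ℝ => e3 * q.1 + e4 * q.2) :=
    (measurable_fst.const_mul e3).add (measurable_snd.const_mul e4)
  have hS12 : Measure.map (fun ω => e1 * d p1 ω + e2 * d p2 ω) P = gaussianReal 0 (2 * v) :=
    hp_map_add ((hmeas p1).const_mul e1).aemeasurable ((hmeas p2).const_mul e2).aemeasurable
      ((hind.indepFun h12).comp (measurable_id'.const_mul e1) (measurable_id'.const_mul e2))
      hv (hp_map_const_mul (hlaw p1) he1) (hp_map_const_mul (hlaw p2) he2)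
  have hS34 : Measure.map (fun ω => e3 * d p3 ω + e4 * d p4 ω) P = gaussianReal 0 (2 * v) :=
    hp_map_add ((hmeas p3).const_mul e3).aemeasurable ((hmeas p4).const_mul e4).aemeasurable
      ((hind.indepFun h34).comp (measurable_id'.const_mul e3) (measurable_id'.const_mul e4))
      hv (hp_map_const_mul (hlaw p3) he3) (hp_map_const_mul (hlaw p4) he4)
  have hpair := hind.indepFun_prodMk_prodMk hmeas p1 p2 p3 p4 h13 h14 h23 h24
  have hindS : IndepFun (fun ω => e1 * d p1 ω + e2 * d p2 ω)
      (fun ω => e3 * d p3 ω + e4 * d p4 ω) P := hpair.comp hm12 hm34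
  exact hp_map_add
    (((hmeas p1).const_mul e1).add ((hmeas p2).const_mul e2)).aemeasurable
    (((hmeas p3).const_mul e3).add ((hmeas p4).const_mul e4)).aemeasurable
    hindS h2v hS12 hS34

lemma hp_integrable_abs {v : ℝ≥0} (hv : v ≠ 0) : Integrable (fun x => |x|) (gaussianReal 0 v) := by
  have hvpos : 0 < (v : ℝ) := NNReal.coe_pos.mpr hv.bot_lt
  rw [gaussianReal_of_var_ne_zero _ hv,
    integrable_withDensity_iff (measurable_gaussianPDF 0 v)
      (ae_of_all _ fun x => ENNReal.ofReal_lt_top)]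
  have hfn : (fun x : ℝ => |x| * (gaussianPDF 0 v x).toReal)
      = fun x => (√(2 * π * v))⁻¹ * |x * rexp (-(2 * (v : ℝ))⁻¹ * x ^ 2)| := by
    funext x
    rw [gaussianPDF, ENNReal.toReal_ofReal (gaussianPDFReal_nonneg _ _ _)]
    simp only [gaussianPDFReal, sub_zero]
    rw [abs_mul, abs_of_pos (Real.exp_pos _),
      show -x ^ 2 / (2 * (v : ℝ)) = -(2 * (v : ℝ))⁻¹ * x ^ 2 by field_simp]
    ring
  rw [hfn]
  exact ((integrable_mul_exp_neg_mul_sq (by positivity)).abs).const_mul _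

lemma hp_abs_pos {v : ℝ≥0} (hv : v ≠ 0) : 0 < ∫ x, |x| ∂(gaussianReal 0 v) := by
  rw [integral_pos_iff_support_of_nonneg (fun x => abs_nonneg x) (hp_integrable_abs hv)]
  have hsupp : Function.support (fun x : ℝ => |x|) = {(0 : ℝ)}ᶜ := by
    ext x; simp [Function.support]
  rw [hsupp]
  have h0 : (gaussianReal 0 v) {(0 : ℝ)} = 0 :=
    gaussianReal_absolutelyContinuous 0 hv (measure_singleton 0)
  rw [measure_compl (measurableSet_singleton 0) (measure_ne_top _ _), h0]
  simp

lemma hp_abs_double {v : ℝ≥0} :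
    ∫ x, |x| ∂(gaussianReal 0 (2 * (2 * v))) = 2 * ∫ x, |x| ∂(gaussianReal 0 v) := by
  have hmap := gaussianReal_map_const_mul (μ := 0) (v := v) (2 : ℝ)
  rw [mul_zero, show (NNReal.mk ((2 : ℝ) ^ 2) (sq_nonneg 2)) = 4 by ext; norm_num] at hmap
  have h4 : (2 : ℝ≥0) * (2 * v) = 4 * v := by ring
  rw [h4, ← hmap, integral_map (measurable_id'.const_mul 2).aemeasurable
    measurable_abs.aestronglyMeasurable]
  simp_rw [abs_mul, Nat.abs_ofNat]
  rw [integral_const_mul]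

lemma hp_abs_transfer {Ω : Type*} [MeasurableSpace Ω] {P : Measure Ω} {X : Ω → ℝ} {w : ℝ≥0}
    (hw : w ≠ 0) (hl : Measure.map X P = gaussianReal 0 w) :
    Integrable (fun ω => |X ω|) P ∧ ∫ ω, |X ω| ∂P = ∫ x, |x| ∂(gaussianReal 0 w) := by
  have hX : AEMeasurable X P := aemeasurable_of_map_neZero (by rw [hl]; infer_instance)
  have hsm : AEStronglyMeasurable (fun x : ℝ => |x|) (Measure.map X P) :=
    measurable_abs.aestronglyMeasurable
  constructor
  · exact (integrable_map_measure hsm hX).mp (by rw [hl]; exact hp_integrable_abs hw)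
  · rw [← hl, integral_map hX hsm]

lemma hp_haar_integral {Ω : Type*} [MeasurableSpace Ω] {P : Measure Ω} [IsProbabilityMeasure P]
    {ι : Type*} {d : ι → Ω → ℝ} (hmeas : ∀ p, Measurable (d p))
    (hind : iIndepFun d P) {v : ℝ≥0} (hv : v ≠ 0)
    (hlaw : ∀ p, Measure.map (d p) P = gaussianReal 0 v)
    (p1 p2 p3 p4 : ι) (h12 : p1 ≠ p2) (h13 : p1 ≠ p3) (h14 : p1 ≠ p4)
    (h23 : p2 ≠ p3) (h24 : p2 ≠ p4) (h34 : p3 ≠ p4)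
    {e1 e2 e3 e4 : ℝ} (he1 : e1 = 1 ∨ e1 = -1) (he2 : e2 = 1 ∨ e2 = -1)
    (he3 : e3 = 1 ∨ e3 = -1) (he4 : e4 = 1 ∨ e4 = -1)
    {g : Ω → ℝ}
    (hg : ∀ᵐ ω ∂P, g ω = (e1 * d p1 ω + e2 * d p2 ω) + (e3 * d p3 ω + e4 * d p4 ω)) :
    Integrable (fun ω => |g ω|) P
      ∧ ∫ ω, |g ω| ∂P = 2 * ∫ x, |x| ∂(gaussianReal 0 v) := by
  have h4v : (2 : ℝ≥0) * (2 * v) ≠ 0 := by simp [hv]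
  have hS := hp_map_combo hmeas hind hv hlaw p1 p2 p3 p4 h12 h13 h14 h23 h24 h34 he1 he2 he3 he4
  have htr := hp_abs_transfer h4v hS
  have habs : (fun ω => |g ω|) =ᵐ[P]
      (fun ω => |(e1 * d p1 ω + e2 * d p2 ω) + (e3 * d p3 ω + e4 * d p4 ω)|) :=
    hg.mono fun ω h => by simp only [h]
  refine ⟨htr.1.congr habs.symm, ?_⟩
  rw [integral_congr_ae habs, htr.2, hp_abs_double]

lemma hp_pair_ne_fst {α β : Type*} {a a' : α} {b b' : β} (h : a ≠ a') : (a, b) ≠ (a', b') :=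
  fun h' => h (congrArg Prod.fst h')
lemma hp_pair_ne_snd {α β : Type*} {a a' : α} {b b' : β} (h : b ≠ b') : (a, b) ≠ (a', b') :=
  fun h' => h (congrArg Prod.snd h')
lemma hp_idxLo_ne_idxHi {m : ℕ} (i i' : Fin m) : idxLo i ≠ idxHi i' := by
  simp only [idxLo, idxHi, ne_eq, Fin.mk.injEq]
  omega

theorem log_expected_L1_decomposition_centered
    (m n : ℕ) (hm : 0 < m) (hn : 0 < n)
    {Ω : Type*} [MeasurableSpace Ω] (P : Measure Ω) [IsProbabilityMeasure P]
    (σ : ℝ) (hσ : 0 < σ) (c : Fin (2 * m) × Fin (2 * n) → Ω → ℝ)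
    (hindep : iIndepFun c P)
    (hlaw : ∀ pq, Measure.map (c pq) P = gaussianReal 0 ⟨σ ^ 2, sq_nonneg σ⟩) :
    Real.log (∫ ω, (1 / (4 * (m : ℝ) * n)) *
          ∑ pq : Fin (2 * m) × Fin (2 * n), |c pq ω| ∂P) + Real.log 2
      = (1 / 4) *
          (Real.log (∫ ω, (1 / ((m : ℝ) * n)) * ∑ i : Fin m, ∑ j : Fin n,
              |haarLL (fun pq => c pq ω) i j| ∂P)
            + Real.log (∫ ω, (1 / ((m : ℝ) * n)) * ∑ i : Fin m, ∑ j : Fin n,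
              |haarLH (fun pq => c pq ω) i j| ∂P)
            + Real.log (∫ ω, (1 / ((m : ℝ) * n)) * ∑ i : Fin m, ∑ j : Fin n,
              |haarHL (fun pq => c pq ω) i j| ∂P)
            + Real.log (∫ ω, (1 / ((m : ℝ) * n)) * ∑ i : Fin m, ∑ j : Fin n,
              |haarHH (fun pq => c pq ω) i j| ∂P)) := by
  classical
  set v : ℝ≥0 := ⟨σ ^ 2, sq_nonneg σ⟩ with hvdef
  have hv : v ≠ 0 := by
    intro h
    have h2 := congrArg NNReal.toReal h
    simp only [hvdef, NNReal.coe_mk, NNReal.coe_zero] at h2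
    exact absurd (pow_eq_zero_iff (by norm_num) |>.mp h2) (ne_of_gt hσ)
  have hae : ∀ pq, AEMeasurable (c pq) P := fun pq =>
    aemeasurable_of_map_neZero (by rw [hlaw pq]; infer_instance)
  set d : Fin (2 * m) × Fin (2 * n) → Ω → ℝ := fun pq => (hae pq).mk (c pq) with hddef
  have hdm : ∀ pq, Measurable (d pq) := fun pq => (hae pq).measurable_mk
  have hdc : ∀ pq, c pq =ᵐ[P] d pq := fun pq => (hae pq).ae_eq_mk
  have hall : ∀ᵐ ω ∂P, ∀ pq, c pq ω = d pq ω := ae_all_iff.mpr hdc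
  have hdlaw : ∀ pq, Measure.map (d pq) P = gaussianReal 0 v := fun pq => by
    rw [← Measure.map_congr (hdc pq), hlaw pq]
  have hdind : iIndepFun d P := by
    have hindep' := hindep
    rw [iIndepFun_iff_measure_inter_preimage_eq_mul] at hindep' ⊢
    intro S sets hsets
    have h1 : P (⋂ i ∈ S, d i ⁻¹' sets i) = P (⋂ i ∈ S, c i ⁻¹' sets i) := by
      refine measure_congr ?_
      filter_upwards [hall] with ω h
      show (ω ∈ ⋂ i ∈ S, d i ⁻¹' sets i) = (ω ∈ ⋂ i ∈ S, c i ⁻¹' sets i)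
      simp only [Set.mem_iInter, Set.mem_preimage, h]
    have h2 : ∀ i, P (d i ⁻¹' sets i) = P (c i ⁻¹' sets i) := by
      intro i
      refine measure_congr ?_
      filter_upwards [hdc i] with ω h
      show (d i ω ∈ sets i) = (c i ω ∈ sets i)
      rw [h]
    rw [h1, hindep' S hsets]
    exact Finset.prod_congr rfl fun i _ => (h2 i).symm
  set a : ℝ := ∫ x, |x| ∂(gaussianReal 0 v) with hadef
  have ha : 0 < a := hp_abs_pos hv
  have hpix : ∀ pq, Integrable (fun ω => |c pq ω|) P ∧ ∫ ω, |c pq ω| ∂P = a := fun pq =>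
    hp_abs_transfer hv (hlaw pq)
  have hm' : (m : ℝ) ≠ 0 := Nat.cast_ne_zero.mpr hm.ne'
  have hn' : (n : ℝ) ≠ 0 := Nat.cast_ne_zero.mpr hn.ne'
  -- block index distinctness
  have hb12 : ∀ (i : Fin m) (j : Fin n), ((idxLo i, idxLo j) : Fin (2*m) × Fin (2*n)) ≠ (idxLo i, idxHi j) :=
    fun i j => hp_pair_ne_snd (hp_idxLo_ne_idxHi j j)
  have hb13 : ∀ (i : Fin m) (j j' : Fin (2 * n)), ((idxLo i, j) : Fin (2*m) × Fin (2*n)) ≠ (idxHi i, j') :=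
    fun i j j' => hp_pair_ne_fst (hp_idxLo_ne_idxHi i i)
  have hb34 : ∀ (i : Fin m) (j : Fin n), ((idxHi i, idxLo j) : Fin (2*m) × Fin (2*n)) ≠ (idxHi i, idxHi j) :=
    fun i j => hp_pair_ne_snd (hp_idxLo_ne_idxHi j j)
  -- the four block integrals
  have hLL : ∀ (i : Fin m) (j : Fin n),
      Integrable (fun ω => |haarLL (fun pq => c pq ω) i j|) P ∧
        ∫ ω, |haarLL (fun pq => c pq ω) i j| ∂P = 2 * a := by
    intro i j
    refine hp_haar_integral hdm hdind hv hdlaw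
      (idxLo i, idxLo j) (idxLo i, idxHi j) (idxHi i, idxLo j) (idxHi i, idxHi j)
      (hb12 i j) (hb13 i _ _) (hb13 i _ _) (hb13 i _ _) (hb13 i _ _) (hb34 i j)
      (e1 := 1) (e2 := 1) (e3 := 1) (e4 := 1)
      (Or.inl rfl) (Or.inl rfl) (Or.inl rfl) (Or.inl rfl) ?_
    filter_upwards [hall] with ω h
    simp only [haarLL, h]
    ring
  have hLH : ∀ (i : Fin m) (j : Fin n),
      Integrable (fun ω => |haarLH (fun pq => c pq ω) i j|) P ∧
        ∫ ω, |haarLH (fun pq => c pq ω) i j| ∂P = 2 * a := by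
    intro i j
    refine hp_haar_integral hdm hdind hv hdlaw
      (idxLo i, idxLo j) (idxLo i, idxHi j) (idxHi i, idxLo j) (idxHi i, idxHi j)
      (hb12 i j) (hb13 i _ _) (hb13 i _ _) (hb13 i _ _) (hb13 i _ _) (hb34 i j)
      (e1 := 1) (e2 := 1) (e3 := -1) (e4 := -1)
      (Or.inl rfl) (Or.inl rfl) (Or.inr rfl) (Or.inr rfl) ?_
    filter_upwards [hall] with ω h
    simp only [haarLH, h]
    ring
  have hHL : ∀ (i : Fin m) (j : Fin n),
      Integrable (fun ω => |haarHL (fun pq => c pq ω) i j|) P ∧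
        ∫ ω, |haarHL (fun pq => c pq ω) i j| ∂P = 2 * a := by
    intro i j
    refine hp_haar_integral hdm hdind hv hdlaw
      (idxLo i, idxLo j) (idxLo i, idxHi j) (idxHi i, idxLo j) (idxHi i, idxHi j)
      (hb12 i j) (hb13 i _ _) (hb13 i _ _) (hb13 i _ _) (hb13 i _ _) (hb34 i j)
      (e1 := 1) (e2 := -1) (e3 := 1) (e4 := -1)
      (Or.inl rfl) (Or.inr rfl) (Or.inl rfl) (Or.inr rfl) ?_
    filter_upwards [hall] with ω h
    simp only [haarHL, h]
    ring
  have hHH : ∀ (i : Fin m) (j : Fin n),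
      Integrable (fun ω => |haarHH (fun pq => c pq ω) i j|) P ∧
        ∫ ω, |haarHH (fun pq => c pq ω) i j| ∂P = 2 * a := by
    intro i j
    refine hp_haar_integral hdm hdind hv hdlaw
      (idxLo i, idxLo j) (idxLo i, idxHi j) (idxHi i, idxLo j) (idxHi i, idxHi j)
      (hb12 i j) (hb13 i _ _) (hb13 i _ _) (hb13 i _ _) (hb13 i _ _) (hb34 i j)
      (e1 := 1) (e2 := -1) (e3 := -1) (e4 := 1)
      (Or.inl rfl) (Or.inr rfl) (Or.inr rfl) (Or.inl rfl) ?_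
    filter_upwards [hall] with ω h
    simp only [haarHH, h]
    ring
  -- value of the pixel-level integral
  have hI0 : ∫ ω, (1 / (4 * (m : ℝ) * n)) *
      ∑ pq : Fin (2 * m) × Fin (2 * n), |c pq ω| ∂P = a := by
    rw [integral_const_mul, integral_finset_sum Finset.univ (fun pq _ => (hpix pq).1),
      Finset.sum_congr rfl (fun pq _ => (hpix pq).2), Finset.sum_const, Finset.card_univ]
    simp only [Fintype.card_prod, Fintype.card_fin, nsmul_eq_mul]
    push_cast
    field_simp
    ring
  -- generic sum computation for the filters
  have hsum : ∀ (g : Fin m → Fin n → Ω → ℝ),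
      (∀ i j, Integrable (fun ω => |g i j ω|) P ∧ ∫ ω, |g i j ω| ∂P = 2 * a) →
      ∫ ω, (1 / ((m : ℝ) * n)) * ∑ i : Fin m, ∑ j : Fin n, |g i j ω| ∂P = 2 * a := by
    intro g hg
    rw [integral_const_mul,
      integral_finset_sum Finset.univ
        (fun i _ => integrable_finset_sum Finset.univ (fun j _ => (hg i j).1))]
    have hin : ∀ i : Fin m, ∫ ω, ∑ j : Fin n, |g i j ω| ∂P = (n : ℝ) * (2 * a) := by
      intro i
      rw [integral_finset_sum Finset.univ (fun j _ => (hg i j).1),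
        Finset.sum_congr rfl (fun j _ => (hg i j).2), Finset.sum_const, Finset.card_univ]
      simp [nsmul_eq_mul]
    rw [Finset.sum_congr rfl (fun i _ => hin i), Finset.sum_const, Finset.card_univ]
    simp only [Fintype.card_fin, nsmul_eq_mul]
    field_simp
  have hILL := hsum (fun i j ω => haarLL (fun pq => c pq ω) i j) hLL
  have hILH := hsum (fun i j ω => haarLH (fun pq => c pq ω) i j) hLH
  have hIHL := hsum (fun i j ω => haarHL (fun pq => c pq ω) i j) hHL
  have hIHH := hsum (fun i j ω => haarHH (fun pq => c pq ω) i j) hHH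
  rw [hI0, hILL, hILH, hIHL, hIHH, Real.log_mul two_ne_zero (ne_of_gt ha)]
  ring
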